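/- Let K be a field of characteristic p > 0 and F a finitely generated separable extension of K. Then for any purely inseparable field extension K ⊂ K', the ring F ⊗_K K' is a field. -/

import Mathlib

set_option synthInstance.maxHeartbeats 400000
set_option maxHeartbeats 1000000
set_option linter.unusedSectionVars false

open TensorProduct

section PowMem
variable (p : ℕ) [Fact p.Prime] (K F K' : Type) [Field K] [Field F] [Field K']
  [Algebra K F] [Algebra K K'] [CharP K p] [IsPurelyInseparable K K']

lemma aux_expChar : ExpChar (TensorProduct K F K') p := by
  have : Nontrivial (TensorProduct K F K') := by
    rw [← not_subsingleton_iff_nontrivial, ← rank_zero_iff (R := K), rank_tensorProduct',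
      mul_eq_zero]
    rw [rank_zero_iff (R := K), rank_zero_iff (R := K)]
    rintro (h | h)
    · exact not_subsingleton_iff_nontrivial.2 inferInstance h
    · exact not_subsingleton_iff_nontrivial.2 inferInstance h
  have : CharP (TensorProduct K F K') p :=
    charP_of_injective_ringHom (algebraMap K _).injective p
  exact ExpChar.prime (Fact.out : p.Prime)

lemma aux_pow_mem (x : TensorProduct K F K') :
    ∃ (m : ℕ) (f : F), x ^ p ^ m = f ⊗ₜ[K] 1 := by
  have hEC := aux_expChar p K F K'
  induction x using TensorProduct.induction_on with
  | zero =>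
    exact ⟨0, 0, by simp⟩
  | tmul f k =>
    have : ExpChar K p := ExpChar.prime Fact.out
    obtain ⟨m, c, hc⟩ := IsPurelyInseparable.pow_mem K p k
    refine ⟨m, c • f ^ p ^ m, ?_⟩
    rw [Algebra.TensorProduct.tmul_pow, ← hc, Algebra.algebraMap_eq_smul_one,
      TensorProduct.tmul_smul, TensorProduct.smul_tmul']
  | add x y hx hy =>
    obtain ⟨a, f, hf⟩ := hx
    obtain ⟨b, g, hg⟩ := hy
    refine ⟨max a b, f ^ p ^ (max a b - a) + g ^ p ^ (max a b - b), ?_⟩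
    have ha : p ^ max a b = p ^ a * p ^ (max a b - a) := by
      rw [← pow_add, Nat.add_sub_cancel' (le_max_left a b)]
    have hb : p ^ max a b = p ^ b * p ^ (max a b - b) := by
      rw [← pow_add, Nat.add_sub_cancel' (le_max_right a b)]
    have hx' : x ^ p ^ max a b = (f ^ p ^ (max a b - a)) ⊗ₜ[K] 1 := by
      rw [ha, pow_mul, hf, Algebra.TensorProduct.tmul_pow, one_pow]
    have hy' : y ^ p ^ max a b = (g ^ p ^ (max a b - b)) ⊗ₜ[K] 1 := by
      rw [hb, pow_mul, hg, Algebra.TensorProduct.tmul_pow, one_pow]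
    rw [add_pow_expChar_pow, hx', hy', TensorProduct.add_tmul]

include p in
lemma aux_isField (hred : IsReduced (TensorProduct K F K')) :
    IsField (TensorProduct K F K') := by
  have hEC := aux_expChar p K F K'
  have : Nontrivial (TensorProduct K F K') := by
    rw [← not_subsingleton_iff_nontrivial, ← rank_zero_iff (R := K), rank_tensorProduct',
      mul_eq_zero]
    rw [rank_zero_iff (R := K), rank_zero_iff (R := K)]
    rintro (h | h)
    · exact not_subsingleton_iff_nontrivial.2 inferInstance h
    · exact not_subsingleton_iff_nontrivial.2 inferInstance h
  refine ⟨exists_pair_ne _, mul_comm, ?_⟩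
  intro x hx
  obtain ⟨m, f, hf⟩ := aux_pow_mem p K F K' x
  have hf0 : f ≠ 0 := by
    rintro rfl
    rw [TensorProduct.zero_tmul] at hf
    exact hx (IsNilpotent.eq_zero ⟨p ^ m, hf⟩)
  refine ⟨f⁻¹ ⊗ₜ[K] 1 * x ^ (p ^ m - 1), ?_⟩
  have hpm : p ^ m - 1 + 1 = p ^ m := Nat.succ_pred_eq_of_pos (pow_pos (Fact.out : p.Prime).pos m)
  calc x * (f⁻¹ ⊗ₜ[K] 1 * x ^ (p ^ m - 1)) = f⁻¹ ⊗ₜ[K] 1 * (x ^ (p ^ m - 1) * x) := by ring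
  _ = f⁻¹ ⊗ₜ[K] 1 * (f ⊗ₜ[K] 1) := by rw [← pow_succ, hpm, hf]
  _ = 1 := by
      rw [Algebra.TensorProduct.tmul_mul_tmul, inv_mul_cancel₀ hf0, mul_one,
        ← Algebra.TensorProduct.one_def]
end PowMem

section Domain
variable (K K' : Type) [Field K] [Field K'] [Algebra K K'] (n : ℕ)

lemma aux_domain :
    IsDomain (TensorProduct K (FractionRing (MvPolynomial (Fin n) K)) K') := by
  classical
  set P := MvPolynomial (Fin n) K
  set P' := MvPolynomial (Fin n) K'
  set FRP := FractionRing P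
  set L := FractionRing P'
  -- the map P → P'
  have hmapinj : Function.Injective (MvPolynomial.map (σ := Fin n) (algebraMap K K')) :=
    MvPolynomial.map_injective _ (algebraMap K K').injective
  let g : P →ₐ[K] L :=
    (IsScalarTower.toAlgHom K P' L).comp (MvPolynomial.mapAlgHom (Algebra.ofId K K'))
  have hginj : Function.Injective g := by
    have : Function.Injective (algebraMap P' L) := IsFractionRing.injective P' L
    exact this.comp hmapinj
  let f : FRP →ₐ[K] L := IsFractionRing.liftAlgHom hginj
  let gK' : K' →ₐ[K] L :=
    (IsScalarTower.toAlgHom K P' L).comp (IsScalarTower.toAlgHom K K' P')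
  let φ : TensorProduct K FRP K' →ₐ[K] L := Algebra.TensorProduct.productMap f gK'
  -- the equivalence P ⊗ K' ≃ P'
  let ψ : TensorProduct K P K' ≃ₐ[K] P' :=
    (Algebra.TensorProduct.comm K P K').trans
      ((MvPolynomial.algebraTensorAlgEquiv K K').restrictScalars K)
  let ι : TensorProduct K P K' →ₐ[K] TensorProduct K FRP K' :=
    Algebra.TensorProduct.map (IsScalarTower.toAlgHom K P FRP) (AlgHom.id K K')
  -- φ ∘ ι = algebraMap ∘ ψ
  have key : φ.comp ι = (IsScalarTower.toAlgHom K P' L).comp ψ.toAlgHom := by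
    ext x
    · simp only [AlgHom.coe_comp, Function.comp_apply, Algebra.TensorProduct.includeLeft_apply,
        Algebra.TensorProduct.map_tmul, AlgHom.coe_id, id_eq, map_one, ψ, ι, φ,
        Algebra.TensorProduct.productMap_apply_tmul, IsScalarTower.coe_toAlgHom',
        AlgEquiv.trans_apply, Algebra.TensorProduct.comm_tmul, AlgEquiv.coe_restrictScalars,
        MvPolynomial.algebraTensorAlgEquiv_tmul, one_smul, map_one, mul_one]
      rw [show ((algebraMap P FRP) (MvPolynomial.X x) : FRP) = algebraMap P FRP (MvPolynomial.X x)
        from rfl]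
      rw [IsFractionRing.liftAlgHom_apply, IsFractionRing.lift_algebraMap]
      simp [g, MvPolynomial.mapAlgHom, Algebra.ofId, MvPolynomial.algebraTensorAlgEquiv_tmul]
      rw [MvPolynomial.algebraTensorAlgEquiv_tmul, one_smul]
      rfl
    · simp only [AlgHom.coe_comp, Function.comp_apply, Algebra.TensorProduct.includeRight_apply,
        Algebra.TensorProduct.map_tmul, map_one, ψ, ι, φ,
        Algebra.TensorProduct.productMap_apply_tmul, one_mul,
        AlgEquiv.trans_apply, Algebra.TensorProduct.comm_tmul, AlgEquiv.coe_restrictScalars,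
        MvPolynomial.algebraTensorAlgEquiv_tmul, map_one, gK']
      simp [IsScalarTower.coe_toAlgHom', Algebra.smul_def, IsScalarTower.algebraMap_apply K' P' L]
  -- clearing denominators
  have claim1 : ∀ z : TensorProduct K FRP K', ∃ (s : nonZeroDivisors P)
      (w : TensorProduct K P K'), (algebraMap P FRP s) ⊗ₜ[K] 1 * z = ι w := by
    intro z
    induction z using TensorProduct.induction_on with
    | zero => exact ⟨1, 0, by simp⟩
    | tmul a k =>
      obtain ⟨⟨b, s⟩, hb⟩ := IsLocalization.surj (nonZeroDivisors P) a
      refine ⟨s, b ⊗ₜ k, ?_⟩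
      simp only [Algebra.TensorProduct.tmul_mul_tmul, one_mul, ι,
        Algebra.TensorProduct.map_tmul, AlgHom.coe_id, id_eq, IsScalarTower.coe_toAlgHom']
      rw [mul_comm, hb]
    | add x y hx hy =>
      obtain ⟨s₁, w₁, h₁⟩ := hx
      obtain ⟨s₂, w₂, h₂⟩ := hy
      refine ⟨s₁ * s₂, ((s₂ : P) ⊗ₜ 1) * w₁ + ((s₁ : P) ⊗ₜ 1) * w₂, ?_⟩
      have e1 : ι ((s₁ : P) ⊗ₜ[K] (1 : K')) = (algebraMap P FRP s₁) ⊗ₜ[K] (1 : K') := by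
        simp [ι]
      have e2 : ι ((s₂ : P) ⊗ₜ[K] (1 : K')) = (algebraMap P FRP s₂) ⊗ₜ[K] (1 : K') := by
        simp [ι]
      have e3 : (algebraMap P FRP ↑(s₁ * s₂)) ⊗ₜ[K] (1 : K') =
          ((algebraMap P FRP s₁) ⊗ₜ[K] (1 : K')) * ((algebraMap P FRP s₂) ⊗ₜ[K] (1 : K')) := by
        simp [Algebra.TensorProduct.tmul_mul_tmul]
      rw [e3, map_add, map_mul, map_mul, e1, e2, ← h₁, ← h₂]
      ring
  -- injectivity of φ
  have hφ : Function.Injective φ := by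
    have hψι : Function.Injective (φ.comp ι) := by
      rw [key]
      exact (IsFractionRing.injective P' L).comp ψ.injective
    intro z₁ z₂ h
    rw [← sub_eq_zero] at h ⊢
    rw [← map_sub] at h
    set z := z₁ - z₂ with hz
    obtain ⟨s, w, hw⟩ := claim1 z
    have hw0 : φ (ι w) = 0 := by
      rw [← hw, map_mul, h, mul_zero]
    have : (φ.comp ι) w = (φ.comp ι) 0 := by simpa using hw0
    have hwz : w = 0 := hψι this
    rw [hwz, map_zero] at hw
    have hs0 : (algebraMap P FRP) (s : P) ≠ 0 :=
      IsFractionRing.to_map_ne_zero_of_mem_nonZeroDivisors s.2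
    have := congrArg (fun u => ((algebraMap P FRP (s : P))⁻¹ ⊗ₜ[K] (1 : K')) * u) hw
    simpa [Algebra.TensorProduct.tmul_mul_tmul, ← mul_assoc, inv_mul_cancel₀ hs0,
      ← Algebra.TensorProduct.one_def] using this
  exact Function.Injective.isDomain φ.toRingHom hφ
end Domain

lemma aux_reduced (K E F K' : Type) [Field K] [Field E] [Field F] [Field K']
    [Algebra K E] [Algebra K F] [Algebra E F] [IsScalarTower K E F] [Algebra K K']
    [FiniteDimensional E F] [Algebra.IsSeparable E F]
    [IsDomain (TensorProduct K E K')] : IsReduced (TensorProduct K F K') := by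
  set C := TensorProduct K E K'
  set M := FractionRing C
  haveI : Algebra.FormallyUnramified E F := Algebra.FormallyUnramified.of_isSeparable _ _
  haveI : Algebra.EssFiniteType E F := inferInstance
  haveI : IsReduced (TensorProduct E M F) := Algebra.FormallyUnramified.isReduced_of_field M _
  haveI hNred : IsReduced (TensorProduct E F M) :=
    isReduced_of_injective (Algebra.TensorProduct.comm E F M).toRingEquiv.toRingHom
      (Algebra.TensorProduct.comm E F M).injective
  -- the injection Θ : F ⊗[K] K' → F ⊗[E] M
  let f' : F →ₐ[K] TensorProduct E F M := Algebra.TensorProduct.includeLeft (S := K)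
  let g' : K' →ₐ[K] TensorProduct E F M :=
    ((Algebra.TensorProduct.includeRight (R := E) (A := F) (B := M)).restrictScalars K).comp
      ((IsScalarTower.toAlgHom K C M).comp
        (Algebra.TensorProduct.includeRight (R := K) (A := E) (B := K')))
  let Θ : TensorProduct K F K' →ₐ[K] TensorProduct E F M :=
    Algebra.TensorProduct.productMap f' g'
  have hΘ : Function.Injective Θ := by
    have hCM : Function.Injective (algebraMap C M) := IsFractionRing.injective C M
    let Φ := (TensorProduct.AlgebraTensorModule.cancelBaseChange K E E F K').symm
    let ΨL : C →ₗ[E] M := (IsScalarTower.toAlgHom E C M).toLinearMap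
    let Ψ : TensorProduct E F C →ₗ[E] TensorProduct E F M := LinearMap.lTensor F ΨL
    have hΨ : Function.Injective Ψ :=
      Module.Flat.lTensor_preserves_injective_linearMap ΨL hCM
    have heq : ∀ z, Θ z = Ψ (Φ z) := by
      intro z
      induction z using TensorProduct.induction_on with
      | zero => simp
      | tmul a k =>
        simp only [Θ, Φ, Ψ, ΨL, f', g', Algebra.TensorProduct.productMap_apply_tmul,
          Algebra.TensorProduct.includeLeft_apply, AlgHom.coe_comp, AlgHom.coe_restrictScalars',
          Function.comp_apply, Algebra.TensorProduct.includeRight_apply,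
          IsScalarTower.coe_toAlgHom', LinearEquiv.coe_coe,
          TensorProduct.AlgebraTensorModule.cancelBaseChange_symm_tmul,
          LinearMap.lTensor_tmul, AlgHom.toLinearMap_apply,
          Algebra.TensorProduct.tmul_mul_tmul, one_mul, mul_one]
        rfl
      | add x y hx hy =>
        simp only [map_add, hx, hy]
    intro a b hab
    rw [heq, heq] at hab
    exact Φ.injective (hΨ hab)
  exact isReduced_of_injective Θ.toRingHom hΘ

/-- Let `K` be a field of characteristic `p > 0` and `F` a finitely generated separable
(in the sense of MacLane, i.e. separably generated) field extension of `K`.  Then for any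
purely inseparable field extension `K ⊂ K'`, the ring `F ⊗_K K'` is a field. -/
theorem stmt_9 (p : ℕ) [Fact p.Prime] (K F : Type) [Field K] [Field F] [Algebra K F]
    [CharP K p]
    (hfg : ∃ s : Finset F, IntermediateField.adjoin K (s : Set F) = ⊤)
    (hsep : ∃ (n : ℕ) (t : Fin n → F), IsTranscendenceBasis K t ∧
      Algebra.IsSeparable ↥(IntermediateField.adjoin K (Set.range t)) F) :
    ∀ (K' : Type) [Field K'] [Algebra K K'] [IsPurelyInseparable K K'],
      IsField (TensorProduct K F K') := by
  classical
  intro K' _ _ _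
  obtain ⟨s, hs⟩ := hfg
  obtain ⟨n, t, ht, hsepF⟩ := hsep
  set E := IntermediateField.adjoin K (Set.range t) with hE
  -- F is finite dimensional over E
  haveI hfd : FiniteDimensional (↥E) F := by
    have hadj : IntermediateField.adjoin (↥E) ((s : Set F)) = ⊤ := by
      rw [eq_top_iff]
      intro x _
      have hx : x ∈ IntermediateField.adjoin K (s : Set F) := hs ▸ IntermediateField.mem_top
      have hle : IntermediateField.adjoin K (s : Set F) ≤
          (IntermediateField.adjoin (↥E) (s : Set F)).restrictScalars K :=
        IntermediateField.adjoin_le_iff.2 (IntermediateField.subset_adjoin _ _)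
      exact hle hx
    have hint : ∀ x ∈ (s : Set F), IsIntegral (↥E) x := fun x _ =>
      Algebra.IsSeparable.isIntegral (↥E) x
    haveI h1 : FiniteDimensional (↥E) (IntermediateField.adjoin (↥E) (s : Set F)) :=
      IntermediateField.finiteDimensional_adjoin hint
    rw [hadj] at h1
    exact (IntermediateField.topEquiv (F := ↥E) (E := F)).toLinearEquiv.finiteDimensional
  -- E ⊗ K' is a domain
  haveI hDom : IsDomain (TensorProduct K (↥E) K') := by
    haveI := aux_domain K K' n
    have e : FractionRing (MvPolynomial (Fin n) K) ≃ₐ[K] ↥E := ht.1.aevalEquivField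
    exact Function.Injective.isDomain
      ((Algebra.TensorProduct.congr e AlgEquiv.refl).symm :
        TensorProduct K (↥E) K' ≃ₐ[K] _).toAlgHom.toRingHom (AlgEquiv.injective _)
  haveI := aux_reduced K (↥E) F K'
  exact aux_isField p K F K' this
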